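/- For every real α > 0 and all natural numbers i and y, equality e^{−iα}(1 + i − i·e^{−α}) − e^{−iα}(1 − e^{−α})·y = e^{−αy} holds if and only if y = i or y = i + 1; for every other natural number y the secant cut is strictly below e^{−αy}. (This expresses where the secant cuts of CSP-L are tight, a consequence of the strict convexity of the exponential function.) -/
import Mathlib

/-- `x^k (1 + k(1-x)) ≤ 1` for `0 < x < 1`, strict for `k ≥ 1`. -/
lemma secant_aux1 (x : ℝ) (hx0 : 0 < x) (hx1 : x < 1) (k : ℕ) :
    x ^ k * (1 + (k : ℝ) * (1 - x)) ≤ 1 ∧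
      (1 ≤ k → x ^ k * (1 + (k : ℝ) * (1 - x)) < 1) := by
  induction k with
  | zero => simp
  | succ k ih =>
    have hp : 0 < x ^ k := pow_pos hx0 k
    have hid : x ^ k * (1 + (k : ℝ) * (1 - x))
        - x ^ (k + 1) * (1 + ((k + 1 : ℕ) : ℝ) * (1 - x))
        = ((k : ℝ) + 1) * (1 - x) ^ 2 * x ^ k := by
      push_cast; ring
    have hpos : 0 < ((k : ℝ) + 1) * (1 - x) ^ 2 * x ^ k := by
      have h1 : (0:ℝ) < (k : ℝ) + 1 := by positivity
      have h2 : (0:ℝ) < (1 - x) ^ 2 := pow_pos (by linarith) 2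
      exact mul_pos (mul_pos h1 h2) hp
    have hlt : x ^ (k + 1) * (1 + ((k + 1 : ℕ) : ℝ) * (1 - x))
        < x ^ k * (1 + (k : ℝ) * (1 - x)) := by linarith
    exact ⟨by linarith [ih.1], fun _ => by linarith [ih.1]⟩

/-- `1 - n(1-x) ≤ x^n` for `0 < x < 1`, strict for `n ≥ 2`. -/
lemma secant_aux2 (x : ℝ) (hx0 : 0 < x) (hx1 : x < 1) (n : ℕ) :
    1 - (n : ℝ) * (1 - x) ≤ x ^ n ∧
      (2 ≤ n → 1 - (n : ℝ) * (1 - x) < x ^ n) := by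
  induction n with
  | zero => simp
  | succ n ih =>
    have hp : 0 < x ^ n := pow_pos hx0 n
    have hxn : x ^ n ≤ 1 := pow_le_one₀ hx0.le hx1.le
    constructor
    · have : x * (1 - (n : ℝ) * (1 - x)) ≤ x * x ^ n :=
        mul_le_mul_of_nonneg_left ih.1 hx0.le
      have hstep : 1 - ((n + 1 : ℕ) : ℝ) * (1 - x) ≤ x * (1 - (n : ℝ) * (1 - x)) := by
        push_cast
        nlinarith [sq_nonneg (1 - x), Nat.cast_nonneg (α := ℝ) n]
      calc 1 - ((n + 1 : ℕ) : ℝ) * (1 - x) ≤ x * (1 - (n : ℝ) * (1 - x)) := hstep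
        _ ≤ x * x ^ n := this
        _ = x ^ (n + 1) := by ring
    · intro hn
      have hn1 : 1 ≤ n := by omega
      have hnr : (1:ℝ) ≤ (n : ℝ) := by exact_mod_cast hn1
      have : x * (1 - (n : ℝ) * (1 - x)) ≤ x * x ^ n :=
        mul_le_mul_of_nonneg_left ih.1 hx0.le
      have hstep : 1 - ((n + 1 : ℕ) : ℝ) * (1 - x) < x * (1 - (n : ℝ) * (1 - x)) := by
        push_cast
        nlinarith [sq_nonneg (1 - x)]
      calc 1 - ((n + 1 : ℕ) : ℝ) * (1 - x) < x * (1 - (n : ℝ) * (1 - x)) := hstep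
        _ ≤ x * x ^ n := this
        _ = x ^ (n + 1) := by ring

/-- The secant cut through `(i, exp (-i α))` and `(i+1, exp (-(i+1) α))` equals
`exp (-α y)` at a natural number `y` if and only if `y = i` or `y = i + 1`; at every
other natural number it is strictly below `exp (-α y)`. -/
theorem secant_cut_tight_iff (α : ℝ) (hα : 0 < α) (i y : ℕ) :
    (Real.exp (-(i * α)) * (1 + (i : ℝ) - (i : ℝ) * Real.exp (-α))
        - Real.exp (-(i * α)) * (1 - Real.exp (-α)) * (y : ℝ)
      = Real.exp (-(α * y))
      ↔ y = i ∨ y = i + 1) ∧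
    (y ≠ i ∧ y ≠ i + 1 →
      Real.exp (-(i * α)) * (1 + (i : ℝ) - (i : ℝ) * Real.exp (-α))
        - Real.exp (-(i * α)) * (1 - Real.exp (-α)) * (y : ℝ)
      < Real.exp (-(α * y))) := by
  set x : ℝ := Real.exp (-α) with hxdef
  have hx0 : 0 < x := Real.exp_pos _
  have hx1 : x < 1 := by
    rw [hxdef, Real.exp_lt_one_iff]; linarith
  have hi : Real.exp (-((i : ℝ) * α)) = x ^ i := by
    rw [hxdef, ← Real.exp_nat_mul]; congr 1; ring
  have hy : Real.exp (-(α * (y : ℝ))) = x ^ y := by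
    rw [hxdef, ← Real.exp_nat_mul]; congr 1; ring
  rw [hi, hy]
  -- strict inequality part
  have strict : y ≠ i ∧ y ≠ i + 1 →
      x ^ i * (1 + (i : ℝ) - (i : ℝ) * x) - x ^ i * (1 - x) * (y : ℝ) < x ^ y := by
    rintro ⟨hne1, hne2⟩
    rcases lt_or_ge y i with hlt | hge
    · -- y < i, write i = y + (k+1)
      obtain ⟨k, rfl⟩ := Nat.exists_eq_add_of_lt hlt
      have key : x ^ (y + k + 1) * (1 + ((y + k + 1 : ℕ) : ℝ) - ((y + k + 1 : ℕ) : ℝ) * x)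
          - x ^ (y + k + 1) * (1 - x) * (y : ℝ)
          = x ^ y * (x ^ (k + 1) * (1 + ((k + 1 : ℕ) : ℝ) * (1 - x))) := by
        push_cast; ring
      rw [key]
      have h1 := (secant_aux1 x hx0 hx1 (k + 1)).2 (by omega)
      calc x ^ y * (x ^ (k + 1) * (1 + ((k + 1 : ℕ) : ℝ) * (1 - x)))
          < x ^ y * 1 := by
            exact mul_lt_mul_of_pos_left h1 (pow_pos hx0 y)
        _ = x ^ y := mul_one _
    · -- y ≥ i and y ≠ i, y ≠ i+1, so y = i + (n+2)
      have : i + 2 ≤ y := by omega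
      obtain ⟨n, rfl⟩ : ∃ n, y = i + (n + 2) := ⟨y - i - 2, by omega⟩
      have key : x ^ i * (1 + (i : ℝ) - (i : ℝ) * x)
          - x ^ i * (1 - x) * ((i + (n + 2) : ℕ) : ℝ)
          = x ^ i * (1 - ((n + 2 : ℕ) : ℝ) * (1 - x)) := by
        push_cast; ring
      rw [key]
      have h2 := (secant_aux2 x hx0 hx1 (n + 2)).2 (by omega)
      calc x ^ i * (1 - ((n + 2 : ℕ) : ℝ) * (1 - x))
          < x ^ i * x ^ (n + 2) := mul_lt_mul_of_pos_left h2 (pow_pos hx0 i)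
        _ = x ^ (i + (n + 2)) := by ring
  refine ⟨⟨fun heq => ?_, fun hor => ?_⟩, strict⟩
  · by_contra hcon
    push_neg at hcon
    exact absurd heq (ne_of_lt (strict hcon))
  · rcases hor with rfl | rfl
    · ring
    · push_cast; ring
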